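/- Let φ : ℝ → ℝ be C¹, strictly decreasing, with φ(ξ) → u_l as ξ → -∞ and φ(ξ) → u_r as ξ → +∞, where u_r < u_l. Let f be C² with f'' ≥ G > 0 on [u_r, u_l], let ξ* satisfy f'(φ(ξ*)) = s for some s, and let B := min_{ξ∈[ξ*-1, ξ*+1]} |φ'(ξ)| > 0. Then for all ξ ∈ ℝ and all α with 0 < α ≤ B/min{|φ(ξ*-1)-φ(ξ*)|, |φ(ξ*+1)-φ(ξ*)|} (say), the quantity A_α(ξ) := -α·sign(ξ - ξ*)·(f'(φ(ξ)) - s) + f''(φ(ξ))·|φ'(ξ)| satisfies A_α(ξ) ≥ C₀·α, where C₀ := G·min{B/α, min{|φ(ξ*-1)-φ(ξ*)|, |φ(ξ*+1)-φ(ξ*)|}}. -/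

import Mathlib

open Real Filter

set_option maxHeartbeats 1000000 in
theorem stmt12 (φ φ' f : ℝ → ℝ) (ur ul s G B ξs : ℝ) (hlt : ur < ul)
    (hφderiv : ∀ ξ : ℝ, HasDerivAt φ (φ' ξ) ξ) (hφ'cont : Continuous φ')
    (hanti : StrictAnti φ)
    (hlimL : Tendsto φ atBot (nhds ul)) (hlimR : Tendsto φ atTop (nhds ur))
    (hf : ContDiff ℝ 2 f) (hG : 0 < G)
    (hconv : ∀ u ∈ Set.Icc ur ul, G ≤ iteratedDeriv 2 f u)
    (hξs : deriv f (φ ξs) = s)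
    (hB : B = sInf ((fun ξ => |φ' ξ|) '' Set.Icc (ξs - 1) (ξs + 1))) (hBpos : 0 < B) :
    ∀ α : ℝ, 0 < α →
      α ≤ B / min |φ (ξs - 1) - φ ξs| |φ (ξs + 1) - φ ξs| →
      ∀ ξ : ℝ,
        -α * Real.sign (ξ - ξs) * (deriv f (φ ξ) - s) + iteratedDeriv 2 f (φ ξ) * |φ' ξ|
          ≥ (G * min (B / α) (min |φ (ξs - 1) - φ ξs| |φ (ξs + 1) - φ ξs|)) * α := by
  intro α hα hαle ξ
  -- range of φ
  have hrange : ∀ x : ℝ, ur < φ x ∧ φ x < ul := by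
    intro x
    refine ⟨?_, ?_⟩
    · have h1 : φ (x + 1) < φ x := hanti (by linarith)
      have h2 : ur ≤ φ (x + 1) :=
        le_of_tendsto hlimR (by
          filter_upwards [eventually_ge_atTop (x + 1)] with y hy
          exact hanti.antitone hy)
      linarith
    · have h1 : φ x < φ (x - 1) := hanti (by linarith)
      have h2 : φ (x - 1) ≤ ul :=
        ge_of_tendsto hlimL (by
          filter_upwards [eventually_le_atBot (x - 1)] with y hy
          exact hanti.antitone hy)
      linarith
  have hIcc : ∀ x : ℝ, φ x ∈ Set.Icc ur ul := fun x => ⟨(hrange x).1.le, (hrange x).2.le⟩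
  -- quantitative monotonicity of deriv f
  have hgap : ∀ a b : ℝ, ur ≤ a → a ≤ b → b ≤ ul → G * (b - a) ≤ deriv f b - deriv f a := by
    intro a b ha hab hb
    have hcont : ContinuousOn (deriv f) (Set.Icc ur ul) :=
      (hf.continuous_deriv one_le_two).continuousOn
    have h1 : ContDiff ℝ 1 (deriv f) := by
      have h2 : ContDiff ℝ ((1 : WithTop ℕ∞) + 1) f := by
        convert hf using 2
        norm_num
      exact (contDiff_succ_iff_deriv.mp h2).2.2
    have hdiff : DifferentiableOn ℝ (deriv f) (interior (Set.Icc ur ul)) :=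
      (h1.differentiable one_ne_zero).differentiableOn
    have hge : ∀ x ∈ interior (Set.Icc ur ul), G ≤ deriv (deriv f) x := by
      intro x hx
      rw [interior_Icc] at hx
      have := hconv x (Set.Ioo_subset_Icc_self hx)
      rwa [iteratedDeriv_succ, iteratedDeriv_one] at this
    exact (convex_Icc ur ul).mul_sub_le_image_sub_of_le_deriv hcont hdiff hge a
      ⟨ha, hab.trans hb⟩ b ⟨ha.trans hab, hb⟩ hab
  -- B is a lower bound of |φ'| on the interval
  have hBle : ∀ x ∈ Set.Icc (ξs - 1) (ξs + 1), B ≤ |φ' x| := by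
    intro x hx
    rw [hB]
    refine csInf_le ⟨0, ?_⟩ ⟨x, hx, rfl⟩
    rintro y ⟨z, -, rfl⟩
    exact abs_nonneg _
  set m := min |φ (ξs - 1) - φ ξs| |φ (ξs + 1) - φ ξs| with hmdef
  have hd1 : φ ξs < φ (ξs - 1) := hanti (by linarith)
  have hd2 : φ (ξs + 1) < φ ξs := hanti (by linarith)
  have hm1 : |φ (ξs - 1) - φ ξs| = φ (ξs - 1) - φ ξs := abs_of_pos (by linarith)
  have hm2 : |φ (ξs + 1) - φ ξs| = -(φ (ξs + 1) - φ ξs) := abs_of_neg (by linarith)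
  have hmpos : 0 < m := lt_min (by rw [hm1]; linarith) (by rw [hm2]; linarith)
  have hαm : α * m ≤ B := (le_div_iff₀ hmpos).mp hαle
  have hminm : min (B / α) m = m :=
    min_eq_right (by rw [le_div_iff₀ hα]; nlinarith)
  rw [hminm]
  have hfu : G ≤ iteratedDeriv 2 f (φ ξ) := hconv _ (hIcc ξ)
  have habs : (0:ℝ) ≤ |φ' ξ| := abs_nonneg _
  rcases le_or_gt ξ (ξs + 1) with h1 | h1
  · rcases le_or_gt (ξs - 1) ξ with h2 | h2
    · -- ξ in the interval : second term dominates
      have hT2 : G * B ≤ iteratedDeriv 2 f (φ ξ) * |φ' ξ| := by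
        have hb := hBle ξ ⟨h2, h1⟩
        nlinarith
      have hT1 : 0 ≤ -α * Real.sign (ξ - ξs) * (deriv f (φ ξ) - s) := by
        rcases lt_trichotomy ξ ξs with hlt' | heq | hgt
        · rw [Real.sign_of_neg (by linarith : ξ - ξs < 0)]
          have h := hgap (φ ξs) (φ ξ) (hIcc ξs).1 (hanti hlt').le (hIcc ξ).2
          rw [hξs] at h
          have hpos : 0 < deriv f (φ ξ) - s :=
            lt_of_lt_of_le (mul_pos hG (sub_pos.mpr (hanti hlt'))) h
          nlinarith [mul_pos hα hpos]
        · simp [heq]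
        · rw [Real.sign_of_pos (by linarith : (0:ℝ) < ξ - ξs)]
          have h := hgap (φ ξ) (φ ξs) (hIcc ξ).1 (hanti hgt).le (hIcc ξs).2
          rw [hξs] at h
          have hpos : 0 < s - deriv f (φ ξ) :=
            lt_of_lt_of_le (mul_pos hG (sub_pos.mpr (hanti hgt))) h
          nlinarith [mul_pos hα hpos]
      have hmB : G * m * α ≤ G * B := by nlinarith
      linarith
    · -- ξ < ξs - 1 : first term dominates
      rw [Real.sign_of_neg (by linarith : ξ - ξs < 0)]
      have hu : φ (ξs - 1) ≤ φ ξ := hanti.antitone h2.le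
      have hgap' := hgap (φ ξs) (φ ξ) (hIcc ξs).1 (by linarith) (hIcc ξ).2
      have hmle : m ≤ φ ξ - φ ξs := by
        have h3 : m ≤ |φ (ξs - 1) - φ ξs| := min_le_left _ _
        rw [hm1] at h3
        linarith
      have hT1 : G * m * α ≤ -α * (-1) * (deriv f (φ ξ) - s) := by
        rw [hξs] at hgap'
        have hA : G * m ≤ deriv f (φ ξ) - s :=
          le_trans (by nlinarith [mul_le_mul_of_nonneg_left hmle hG.le]) hgap'
        have := mul_le_mul_of_nonneg_left hA hα.le
        nlinarith [this]
      have hT2 : 0 ≤ iteratedDeriv 2 f (φ ξ) * |φ' ξ| := mul_nonneg (hG.le.trans hfu) habs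
      linarith
  · -- ξ > ξs + 1 : first term dominates
    rw [Real.sign_of_pos (by linarith : (0:ℝ) < ξ - ξs)]
    have hu : φ ξ ≤ φ (ξs + 1) := hanti.antitone h1.le
    have hgap' := hgap (φ ξ) (φ ξs) (hIcc ξ).1 (by linarith) (hIcc ξs).2
    have hmle : m ≤ φ ξs - φ ξ := by
      have h3 : m ≤ |φ (ξs + 1) - φ ξs| := min_le_right _ _
      rw [hm2] at h3
      linarith
    have hT1 : G * m * α ≤ -α * 1 * (deriv f (φ ξ) - s) := by
      rw [hξs] at hgap'
      have hA : G * m ≤ s - deriv f (φ ξ) :=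
        le_trans (mul_le_mul_of_nonneg_left hmle hG.le) hgap'
      have := mul_le_mul_of_nonneg_left hA hα.le
      nlinarith [this]
    have hT2 : 0 ≤ iteratedDeriv 2 f (φ ξ) * |φ' ξ| := mul_nonneg (hG.le.trans hfu) habs
    linarith
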